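/- Cyclic decomposition of a primary matrix: Let A ∈ GL(n,F) with μ_A = p^m for some monic irreducible p ∈ F[X]. Then there exist vectors v_1, ..., v_k ∈ F^n such that F^n = ⟨v_1⟩_A ⊕ ... ⊕ ⟨v_k⟩_A. -/

import Mathlib

open Polynomial Matrix

section Aux

variable {F : Type*} [Field F] {n : ℕ}

private lemma pow_vecMulLinear (A : Matrix (Fin n) (Fin n) F)
    (k : ℕ) (w : Fin n → F) : ((Matrix.vecMulLinear A) ^ k) w = w ᵥ* (A ^ k) := by
  induction k generalizing w with
  | zero => simp
  | succ k ih =>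
    rw [pow_succ, Module.End.mul_apply, Matrix.vecMulLinear_apply, pow_succ',
      ← Matrix.vecMul_vecMul, ih]

private lemma aeval_vecMulLinear (A : Matrix (Fin n) (Fin n) F)
    (q : F[X]) (w : Fin n → F) :
    (aeval (Matrix.vecMulLinear A) q) w = w ᵥ* (aeval A q) := by
  induction q using Polynomial.induction_on' with
  | add p q hp hq => simp [map_add, Matrix.vecMul_add, hp, hq]
  | monomial k c =>
      rw [aeval_monomial, aeval_monomial, ← smul_eq_mul, algebraMap_smul,
        ← smul_eq_mul, algebraMap_smul, LinearMap.smul_apply, pow_vecMulLinear]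
      ext j
      simp only [Pi.smul_apply, Matrix.vecMul, dotProduct, Finset.smul_sum, smul_eq_mul,
        Matrix.smul_apply]
      rw [Finset.mul_sum]
      exact Finset.sum_congr rfl fun i _ => by ring

end Aux

private lemma isInternal_range_lof (R : Type*) [CommRing R] {ι : Type*} [DecidableEq ι]
    (Q : ι → Type*) [∀ i, AddCommGroup (Q i)] [∀ i, Module R (Q i)] :
    DirectSum.IsInternal (fun i => LinearMap.range (DirectSum.lof R ι Q i)) := by
  rw [DirectSum.isInternal_submodule_iff_iSupIndep_and_iSup_eq_top]
  constructor
  · intro i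
    rw [disjoint_iff_inf_le]
    have hker : (⨆ j ∈ ({i}ᶜ : Set ι), LinearMap.range (DirectSum.lof R ι Q j))
        ≤ LinearMap.ker (DirectSum.component R ι Q i) := by
      refine iSup_le fun j => iSup_le fun hj => ?_
      rintro x ⟨y, rfl⟩
      rw [LinearMap.mem_ker]
      rw [DirectSum.component.of, dif_neg (by simpa using hj)]
    intro x hx
    obtain ⟨⟨y, rfl⟩, hx2⟩ := hx
    have h3 := hker hx2
    rw [LinearMap.mem_ker] at h3
    rw [DirectSum.component.lof_self] at h3
    simp [h3]
  · rw [eq_top_iff]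
    intro x _
    induction x using DirectSum.induction_on with
    | zero => exact zero_mem _
    | of i y => exact Submodule.mem_iSup_of_mem i ⟨y, rfl⟩
    | add x y hx hy => exact add_mem (hx trivial) (hy trivial)

private lemma isInternal_map {R M N : Type*} [CommRing R] [AddCommGroup M] [Module R M]
    [AddCommGroup N] [Module R N] {ι : Type*} [DecidableEq ι]
    (e : M ≃ₗ[R] N) {S : ι → Submodule R M} (h : DirectSum.IsInternal S) :
    DirectSum.IsInternal (fun i => (S i).map (e : M →ₗ[R] N)) := by
  rw [DirectSum.isInternal_submodule_iff_iSupIndep_and_iSup_eq_top] at h ⊢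
  refine ⟨?_, ?_⟩
  · have := h.1.map_orderIso (Submodule.orderIsoMapComap e)
    convert this using 2
    rfl
  · rw [← Submodule.map_iSup, h.2, Submodule.map_top, LinearEquiv.range]

private lemma isInternal_reindex {R M : Type*} [CommRing R] [AddCommGroup M] [Module R M]
    {ι κ : Type*} [DecidableEq ι] [DecidableEq κ] (σ : κ ≃ ι) {S : ι → Submodule R M}
    (h : DirectSum.IsInternal S) : DirectSum.IsInternal (fun i => S (σ i)) := by
  rw [DirectSum.isInternal_submodule_iff_iSupIndep_and_iSup_eq_top] at h ⊢
  exact ⟨h.1.comp σ.injective, by rw [← h.2]; exact σ.iSup_comp⟩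

private lemma isInternal_restrictScalars (S R M : Type*) [Semiring R] [AddCommMonoid M]
    [Module R M] [Semiring S] [Module S M] [SMul S R] [IsScalarTower S R M]
    {ι : Type*} [DecidableEq ι] {p : ι → Submodule R M}
    (h : DirectSum.IsInternal p) :
    DirectSum.IsInternal (fun i => (p i).restrictScalars S) := h

/-- `p` is the minimal polynomial of the vector `v` with respect to the matrix `A`
(row vectors, right multiplication). -/
def IsVecMinpoly {F : Type*} [Field F] {n : ℕ} (A : Matrix (Fin n) (Fin n) F)
    (v : Fin n → F) (p : F[X]) : Prop :=
  p.Monic ∧ v ᵥ* (aeval A p) = 0 ∧ ∀ q : F[X], v ᵥ* (aeval A q) = 0 → p ∣ q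

/-- The `A`-span `⟨v⟩_A = {v·p(A) : p ∈ F[X]}` of a vector `v`. -/
def aspan {F : Type*} [Field F] {n : ℕ} (A : Matrix (Fin n) (Fin n) F)
    (v : Fin n → F) : Submodule F (Fin n → F) :=
  Submodule.span F {w | ∃ p : F[X], w = v ᵥ* (aeval A p)}

/-- The companion matrix of a polynomial `p` (for the right-multiplication convention):
identity superdiagonal block, last row the negated coefficients of `p`. -/
def companion {F : Type*} [Field F] (n : ℕ) (p : F[X]) : Matrix (Fin n) (Fin n) F :=
  Matrix.of fun i j => if (i : ℕ) = n - 1 then -p.coeff j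
    else if (i : ℕ) + 1 = (j : ℕ) then 1 else 0

private lemma aspan_eq {F : Type*} [Field F] {n : ℕ} (A : Matrix (Fin n) (Fin n) F)
    (x : Module.AEval' (Matrix.vecMulLinear A)) :
    aspan A ((Module.AEval'.of (Matrix.vecMulLinear A)).symm x) =
      ((Submodule.span F[X] {x}).restrictScalars F).map
        ((Module.AEval'.of (Matrix.vecMulLinear A)).symm :
          Module.AEval' (Matrix.vecMulLinear A) →ₗ[F] (Fin n → F)) := by
  have key : ∀ q : F[X], (Module.AEval'.of (Matrix.vecMulLinear A)).symm (q • x) =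
      ((Module.AEval'.of (Matrix.vecMulLinear A)).symm x) ᵥ* (aeval A q) := fun q => by
    rw [Module.AEval.of_symm_smul]
    exact aeval_vecMulLinear A q _
  have hset : {w | ∃ p : F[X],
        w = ((Module.AEval'.of (Matrix.vecMulLinear A)).symm x) ᵥ* (aeval A p)} =
      ↑(((Submodule.span F[X] {x}).restrictScalars F).map
        ((Module.AEval'.of (Matrix.vecMulLinear A)).symm :
          Module.AEval' (Matrix.vecMulLinear A) →ₗ[F] (Fin n → F))) := by
    ext y
    simp only [Set.mem_setOf_eq, SetLike.mem_coe, Submodule.mem_map,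
      Submodule.restrictScalars_mem, Submodule.mem_span_singleton, LinearEquiv.coe_coe]
    constructor
    · rintro ⟨q, rfl⟩
      exact ⟨q • x, ⟨q, rfl⟩, key q⟩
    · rintro ⟨z, ⟨q, rfl⟩, rfl⟩
      exact ⟨q, key q⟩
  rw [aspan, hset, Submodule.span_eq]

/-- Cyclic decomposition of a primary matrix: if `μ_A = p^m` with `p` irreducible, then `Fⁿ`
is a direct sum of `A`-cyclic subspaces. -/
theorem stmt15 {F : Type*} [Field F] {n : ℕ} (A : Matrix (Fin n) (Fin n) F) (hA : IsUnit A)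
    (p : F[X]) (hp : p.Monic) (hirr : Irreducible p) (m : ℕ)
    (hmin : minpoly F A = p ^ m) :
    ∃ (k : ℕ) (v : Fin k → Fin n → F),
      DirectSum.IsInternal (fun i => aspan A (v i)) := by
  classical
  set φ := Matrix.vecMulLinear A with hφ
  have tors : Module.IsTorsion F[X] (Module.AEval' φ) := by
    intro x
    refine ⟨⟨p ^ m, mem_nonZeroDivisors_of_ne_zero (pow_ne_zero _ hp.ne_zero)⟩, ?_⟩
    apply (Module.AEval'.of φ).symm.injective
    rw [Submonoid.mk_smul, Module.AEval.of_symm_smul, map_zero]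
    show (aeval φ (p ^ m)) ((Module.AEval'.of φ).symm x) = 0
    rw [aeval_vecMulLinear, ← hmin, minpoly.aeval, Matrix.vecMul_zero]
  obtain ⟨ι, fι, q, hq, ex, ⟨e⟩⟩ := Module.equiv_directSum_of_isTorsion tors
  haveI := fι
  set Q : ι → Type _ := fun i => F[X] ⧸ (F[X] ∙ q i ^ ex i) with hQ
  set σ : Fin (Fintype.card ι) ≃ ι := (Fintype.equivFin ι).symm with hσ
  set w : Fin (Fintype.card ι) → Module.AEval' φ :=
    fun i => e.symm (DirectSum.lof F[X] ι Q (σ i) (Submodule.Quotient.mk 1)) with hw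
  refine ⟨Fintype.card ι, fun i => (Module.AEval'.of φ).symm (w i), ?_⟩
  have h1 : DirectSum.IsInternal (fun i : ι => LinearMap.range (DirectSum.lof F[X] ι Q i)) :=
    isInternal_range_lof _ _
  have h1' := isInternal_reindex (M := DirectSum ι Q) σ h1
  have h2 := isInternal_map e.symm h1'
  have hrange : ∀ j : ι, (LinearMap.range (DirectSum.lof F[X] ι Q j)).map
      (e.symm : DirectSum ι Q →ₗ[F[X]] Module.AEval' φ) =
      Submodule.span F[X] {e.symm (DirectSum.lof F[X] ι Q j (Submodule.Quotient.mk 1))} := by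
    intro j
    have htop : (⊤ : Submodule F[X] (Q j)) =
        Submodule.span F[X] {(Submodule.Quotient.mk 1 : Q j)} := by
      symm
      rw [eq_top_iff]
      rintro y -
      obtain ⟨y, rfl⟩ := Submodule.Quotient.mk_surjective _ y
      rw [Submodule.mem_span_singleton]
      exact ⟨y, by rw [← Submodule.Quotient.mk_smul, smul_eq_mul, mul_one]⟩
    rw [LinearMap.range_eq_map, htop, Submodule.map_span, Set.image_singleton,
      Submodule.map_span, Set.image_singleton]
    simp only [LinearEquiv.coe_coe]
  have h2' : DirectSum.IsInternal (fun i : Fin (Fintype.card ι) =>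
      Submodule.span F[X] ({w i} : Set (Module.AEval' φ))) := by
    have hfam : (fun i : Fin (Fintype.card ι) =>
        Submodule.span F[X] ({w i} : Set (Module.AEval' φ))) =
        fun i => ((LinearMap.range (DirectSum.lof F[X] ι Q (σ i))).map
          (e.symm : DirectSum ι Q →ₗ[F[X]] Module.AEval' φ)) :=
      funext fun i => (hrange (σ i)).symm
    rw [hfam]
    exact h2
  have h3 := isInternal_restrictScalars F F[X] (Module.AEval' φ) h2'
  have h4 := isInternal_map
    ((Module.AEval'.of φ).symm : Module.AEval' φ ≃ₗ[F] (Fin n → F)) h3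
  convert h4 using 1
  · rfl
  funext i
  exact aspan_eq A (w i)
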